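/- For a finite set S with |S| = s ≥ 1 and a non-negative integer t, there exists a Bondy system 𝒜 on S with |𝒜| = t if and only if 0 ≤ t ≤ 2^(s-1). -/

import Mathlib

def IsBondy {α : Type*} [DecidableEq α] (S : Finset α) (𝒜 : Finset (Finset α)) : Prop :=
  ∃ a ∈ S, ∀ A ∈ 𝒜, insert a A ∈ 𝒜 → a ∈ A

theorem bondy_card_iff {α : Type*} [DecidableEq α] (S : Finset α)
    (hs : 1 ≤ S.card) (t : ℕ) :
    (∃ 𝒜 : Finset (Finset α), (∀ A ∈ 𝒜, A ⊆ S) ∧ IsBondy S 𝒜 ∧ 𝒜.card = t) ↔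
      t ≤ 2 ^ (S.card - 1) := by
  constructor
  · rintro ⟨𝒜, hsub, ⟨a, haS, hb⟩, rfl⟩
    have hcard : ((S.erase a).powerset).card = 2 ^ (S.card - 1) := by
      rw [Finset.card_powerset, Finset.card_erase_of_mem haS]
    rw [← hcard]
    apply Finset.card_le_card_of_injOn (fun A => A.erase a)
    · intro A hA
      simp only [Finset.mem_powerset]
      exact Finset.mem_coe.mpr (Finset.mem_powerset.mpr (Finset.erase_subset_erase a (hsub A hA)))
    · intro A hA A' hA' h'
      have h : A.erase a = A'.erase a := h'
      by_cases h1 : a ∈ A <;> by_cases h2 : a ∈ A'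
      · rw [← Finset.insert_erase h1, ← Finset.insert_erase h2, h]
      · exfalso
        apply h2
        have hA'e : A'.erase a = A' := Finset.erase_eq_of_notMem h2
        have : insert a A' = A := by
          rw [← hA'e, ← h, Finset.insert_erase h1]
        exact hb A' hA' (this ▸ hA)
      · exfalso
        apply h1
        have hAe : A.erase a = A := Finset.erase_eq_of_notMem h1
        have : insert a A = A' := by
          rw [← hAe, h, Finset.insert_erase h2]
        exact hb A hA (this ▸ hA')
      · rw [← Finset.erase_eq_of_notMem h1, ← Finset.erase_eq_of_notMem h2, h]
  · intro ht
    obtain ⟨a, haS⟩ := Finset.card_pos.mp hs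
    have hcard : ((S.erase a).powerset).card = 2 ^ (S.card - 1) := by
      rw [Finset.card_powerset, Finset.card_erase_of_mem haS]
    obtain ⟨𝒜, h𝒜sub, h𝒜card⟩ :=
      Finset.exists_subset_card_eq (hcard ▸ ht : t ≤ ((S.erase a).powerset).card)
    refine ⟨𝒜, ?_, ⟨a, haS, ?_⟩, h𝒜card⟩
    · intro A hA
      exact (Finset.mem_powerset.mp (h𝒜sub hA)).trans (Finset.erase_subset a S)
    · intro A hA hins
      exfalso
      have := Finset.mem_powerset.mp (h𝒜sub hins) (Finset.mem_insert_self a A)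
      exact (Finset.notMem_erase a S) this
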